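/- Let p be prime, m, n, s ∈ {0,...,p-1}, and M = m+n+s-(p-1) with 0 ≤ M < p-1. Then for every integer j with 0 ≤ j ≤ M: (-1)^j C(m, M-j) C(n, j) ≡ ∑_{k=0}^{s} C(s,k) C(m, M-k) C(M-k, j-k) mod p. -/

import Mathlib

open Finset Nat

lemma aux_term (m M j k : ℕ) (hk : k ≤ j) (hj : j ≤ M) :
    m.choose (M - k) * (M - k).choose (j - k) =
      m.choose (M - j) * (m - (M - j)).choose (j - k) := by
  have h1 : (M - k).choose (j - k) = (M - k).choose (M - j) := by
    rw [← Nat.choose_symm (by omega : M - j ≤ M - k)]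
    congr 1
    omega
  rw [h1]
  by_cases hm : M - k ≤ m
  · rw [Nat.choose_mul (n := m) (by omega : M - j ≤ M - k)]
    have h2 : M - k - (M - j) = j - k := by omega
    rw [h2]
  · rw [Nat.choose_eq_zero_of_lt (by omega), Nat.zero_mul]
    by_cases hm2 : M - j ≤ m
    · rw [Nat.choose_eq_zero_of_lt (by omega : m - (M - j) < j - k), Nat.mul_zero]
    · rw [Nat.choose_eq_zero_of_lt (by omega), Nat.zero_mul]

lemma aux_vandermonde (s b j : ℕ) :
    ∑ k ∈ range (s + 1), (if k ≤ j then s.choose k * b.choose (j - k) else 0) =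
      (s + b).choose j := by
  rw [Nat.add_choose_eq, Finset.Nat.sum_antidiagonal_eq_sum_range_succ_mk]
  have h1 : ∑ k ∈ range (s + 1), (if k ≤ j then s.choose k * b.choose (j - k) else 0)
      = ∑ k ∈ range (s + j + 1), (if k ≤ j then s.choose k * b.choose (j - k) else 0) := by
    apply Finset.sum_subset (Finset.range_subset_range.2 (by omega))
    intro x hx hx2
    simp only [Finset.mem_range] at hx hx2
    have : s.choose x = 0 := Nat.choose_eq_zero_of_lt (by omega)
    simp [this]
  have h2 := Finset.sum_subset (Finset.range_subset_range.2 (show j + 1 ≤ s + j + 1 by omega))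
    (f := fun k => if k ≤ j then s.choose k * b.choose (j - k) else 0)
    (fun x hx hx2 => by
      simp only [Finset.mem_range] at hx hx2
      exact if_neg (by omega))
  rw [h1, ← h2]
  apply Finset.sum_congr rfl
  intro x hx
  simp only [Finset.mem_range] at hx
  show (if x ≤ j then s.choose x * b.choose (j - x) else 0) = s.choose x * b.choose (j - x)
  exact if_pos (by omega)

lemma aux_cong (p n t j : ℕ) (hp : p.Prime) (hnt : n + t + 1 = p) (hjp : j < p) :
    ((-1 : ZMod p)) ^ j * ((n.choose j : ℕ) : ZMod p) = (((t + j).choose j : ℕ) : ZMod p) := by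
  haveI : Fact p.Prime := ⟨hp⟩
  rcases le_or_gt j n with h | h
  · have hfac : ((j ! : ℕ) : ZMod p) ≠ 0 := by
      rw [Ne, ZMod.natCast_eq_zero_iff, hp.dvd_factorial]
      omega
    apply mul_left_cancel₀ hfac
    have e1 : ((j ! : ℕ) : ZMod p) * ((-1 : ZMod p) ^ j * ((n.choose j : ℕ) : ZMod p))
        = (-1 : ZMod p) ^ j * ((n.descFactorial j : ℕ) : ZMod p) := by
      rw [Nat.descFactorial_eq_factorial_mul_choose]
      push_cast
      ring
    have e2 : ((n.descFactorial j : ℕ) : ZMod p)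
        = (-1 : ZMod p) ^ j * (((∏ i ∈ range j, (t + 1 + i) : ℕ)) : ZMod p) := by
      rw [Nat.descFactorial_eq_prod_range]
      push_cast
      have hsub : ∏ i ∈ range j, ((n - i : ℕ) : ZMod p)
          = ∏ i ∈ range j, ((n : ZMod p) - (i : ZMod p)) := by
        apply Finset.prod_congr rfl
        intro i hi
        simp only [Finset.mem_range] at hi
        rw [Nat.cast_sub (by omega)]
      have hcongr : ∏ i ∈ range j, ((n : ZMod p) - (i : ZMod p))
          = ∏ i ∈ range j, (-1 : ZMod p) * ((t : ZMod p) + 1 + (i : ZMod p)) := by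
        apply Finset.prod_congr rfl
        intro i _
        have hn : (n : ZMod p) = -(t : ZMod p) - 1 := by
          have h0 : ((n + t + 1 : ℕ) : ZMod p) = 0 := by rw [hnt]; exact ZMod.natCast_self p
          push_cast at h0
          linear_combination h0
        rw [hn]
        ring
      rw [hsub, hcongr, Finset.prod_mul_distrib, Finset.prod_const, Finset.card_range]
    have e3 : (((t + j).descFactorial j : ℕ) : ZMod p)
        = (((∏ i ∈ range j, (t + 1 + i) : ℕ)) : ZMod p) := by
      rw [Nat.descFactorial_eq_prod_range]
      congr 1
      rw [← Finset.prod_range_reflect]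
      apply Finset.prod_congr rfl
      intro i hi
      simp only [Finset.mem_range] at hi
      omega
    calc ((j ! : ℕ) : ZMod p) * ((-1 : ZMod p) ^ j * ((n.choose j : ℕ) : ZMod p))
        = (-1 : ZMod p) ^ j * ((-1 : ZMod p) ^ j * (((∏ i ∈ range j, (t + 1 + i) : ℕ)) : ZMod p)) := by
          rw [e1, e2]
      _ = (((∏ i ∈ range j, (t + 1 + i) : ℕ)) : ZMod p) := by
          rw [← mul_assoc, ← mul_pow]
          simp
      _ = ((j ! : ℕ) : ZMod p) * (((t + j).choose j : ℕ) : ZMod p) := by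
          rw [← e3, Nat.descFactorial_eq_factorial_mul_choose]
          push_cast
          ring
  · rw [Nat.choose_eq_zero_of_lt h]
    have : ((( (t + j).choose j : ℕ)) : ZMod p) = 0 := by
      rw [ZMod.natCast_eq_zero_iff]
      exact Nat.Prime.dvd_choose hp hjp (by omega) (by omega)
    rw [this]
    simp

theorem choose_congruence_general (p m n s M : ℕ) (hp : p.Prime)
    (hm : m ≤ p - 1) (hn : n ≤ p - 1) (hs : s ≤ p - 1)
    (hM : (M : ℤ) = (m : ℤ) + n + s - ((p : ℤ) - 1)) (hM2 : M < p - 1)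
    (j : ℕ) (hj : j ≤ M) :
    ((-1 : ZMod p) ^ j * (m.choose (M - j) : ZMod p) * (n.choose j : ZMod p)) =
      ∑ k ∈ Finset.range (s + 1),
        if k ≤ M ∧ k ≤ j then
          (s.choose k : ZMod p) * (m.choose (M - k) : ZMod p) *
            ((M - k).choose (j - k) : ZMod p)
        else 0 := by
  have hp2 : 2 ≤ p := hp.two_le
  have key : m + n + s + 1 = M + p := by omega
  -- natural number identity for the RHS
  have hB : (∑ k ∈ range (s + 1),
      if k ≤ M ∧ k ≤ j then s.choose k * m.choose (M - k) * (M - k).choose (j - k) else 0)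
      = m.choose (M - j) * (s + (m - (M - j))).choose j := by
    have hterm : ∀ k, (if k ≤ M ∧ k ≤ j then
        s.choose k * m.choose (M - k) * (M - k).choose (j - k) else 0)
        = m.choose (M - j) * (if k ≤ j then s.choose k * (m - (M - j)).choose (j - k) else 0) := by
      intro k
      by_cases hk : k ≤ j
      · rw [if_pos ⟨hk.trans hj, hk⟩, if_pos hk, mul_assoc, aux_term m M j k hk hj]
        ring
      · rw [if_neg (by tauto), if_neg hk, mul_zero]
    simp_rw [hterm]
    rw [← Finset.mul_sum, aux_vandermonde]
  have hcast : (∑ k ∈ Finset.range (s + 1),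
      if k ≤ M ∧ k ≤ j then
        (s.choose k : ZMod p) * (m.choose (M - k) : ZMod p) * ((M - k).choose (j - k) : ZMod p)
      else 0)
      = (((∑ k ∈ range (s + 1),
        if k ≤ M ∧ k ≤ j then s.choose k * m.choose (M - k) * (M - k).choose (j - k) else 0 : ℕ)) : ZMod p) := by
    push_cast
    rfl
  rw [hcast, hB]
  by_cases hmj : M - j ≤ m
  · have ht : s + (m - (M - j)) = (m + s - M) + j := by omega
    have hnt : n + (m + s - M) + 1 = p := by omega
    rw [ht]
    push_cast
    rw [← aux_cong p n (m + s - M) j hp hnt (by omega)]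
    ring
  · rw [Nat.choose_eq_zero_of_lt (by omega : m < M - j)]
    push_cast
    ring
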